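/- arXiv:1701.04196 — 5 statements merged into one kernel-verified Lean document; each statement's English description precedes it below -/
import Mathlib

section
/- A bounded function f : ℤ → ℂ belongs to B_ℤ if and only if f(k) → 0 as k → −∞ and the limit lim_{k→∞} f(k) exists in ℂ. -/
open BoundedContinuousFunction Filter Topology

/-- The indicator function of `{k : ℤ | n ≤ k}` as a bounded (continuous) function `ℤ → ℂ`,
an element of `ℓ∞(ℤ, ℂ)`. -/
noncomputable def indBZ (n : ℤ) : ℤ →ᵇ ℂ :=
  BoundedContinuousFunction.ofNormedAddCommGroup
    (fun k => if n ≤ k then (1:ℂ) else 0)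
    (continuous_of_discreteTopology) 1
    (fun k => by by_cases h : n ≤ k <;> simp [h])

/-- `B_ℤ`: the closed linear span of `{1_n : n ∈ ℤ}` in `ℓ∞(ℤ, ℂ)`. -/
noncomputable def BZ : Submodule ℂ (ℤ →ᵇ ℂ) :=
  (Submodule.span ℂ (Set.range indBZ)).topologicalClosure

lemma indBZ_apply (n k : ℤ) : indBZ n k = if n ≤ k then (1:ℂ) else 0 := rfl

lemma indBZ_atBot (n : ℤ) : Tendsto (fun k : ℤ => indBZ n k) atBot (𝓝 (0:ℂ)) := by
  apply Tendsto.congr' _ tendsto_const_nhds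
  filter_upwards [eventually_lt_atBot n] with k hk
  simp [indBZ_apply, not_le.mpr hk]

lemma indBZ_atTop (n : ℤ) : Tendsto (fun k : ℤ => indBZ n k) atTop (𝓝 (1:ℂ)) := by
  apply Tendsto.congr' _ tendsto_const_nhds
  filter_upwards [eventually_ge_atTop n] with k hk
  simp [indBZ_apply, hk]

/-- The submodule of elements of `ℓ∞(ℤ, ℂ)` tending to `0` at `−∞` and having a limit
at `+∞`. -/
noncomputable def SZ : Submodule ℂ (ℤ →ᵇ ℂ) where
  carrier := {f | Tendsto (fun k : ℤ => f k) atBot (𝓝 (0:ℂ)) ∧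
    ∃ L : ℂ, Tendsto (fun k : ℤ => f k) atTop (𝓝 L)}
  add_mem' := by
    rintro f g ⟨hf1, L, hf2⟩ ⟨hg1, M, hg2⟩
    refine ⟨?_, L + M, ?_⟩
    · simpa using hf1.add hg1
    · simpa using hf2.add hg2
  zero_mem' := ⟨by simpa using (tendsto_const_nhds : Tendsto (fun _ : ℤ => (0:ℂ)) atBot _),
    0, by simpa using (tendsto_const_nhds : Tendsto (fun _ : ℤ => (0:ℂ)) atTop _)⟩
  smul_mem' := by
    rintro c f ⟨h1, L, h2⟩
    refine ⟨?_, c * L, ?_⟩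
    · simpa using h1.const_mul c
    · simpa using h2.const_mul c

lemma isClosed_tendsto_atBot :
    IsClosed {f : ℤ →ᵇ ℂ | Tendsto (fun k : ℤ => f k) atBot (𝓝 (0:ℂ))} := by
  apply isClosed_of_closure_subset
  intro f hf
  rw [Set.mem_setOf_eq, NormedAddCommGroup.tendsto_nhds_zero]
  intro ε hε
  obtain ⟨g, hg, hfg⟩ := Metric.mem_closure_iff.mp hf (ε/2) (by positivity)
  have h2 : ∀ᶠ k : ℤ in atBot, ‖g k‖ < ε/2 :=
    NormedAddCommGroup.tendsto_nhds_zero.mp hg (ε/2) (by positivity)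
  filter_upwards [h2] with k hk
  have hd : ‖f k - g k‖ ≤ dist f g := by
    simpa [dist_eq_norm] using BoundedContinuousFunction.dist_coe_le_dist (f := f) (g := g) k
  calc ‖f k‖ = ‖(f k - g k) + g k‖ := by ring_nf
    _ ≤ ‖f k - g k‖ + ‖g k‖ := norm_add_le _ _
    _ < ε/2 + ε/2 := by gcongr; linarith
    _ = ε := by ring

lemma isClosed_exists_tendsto_atTop :
    IsClosed {f : ℤ →ᵇ ℂ | ∃ L : ℂ, Tendsto (fun k : ℤ => f k) atTop (𝓝 L)} := by
  apply isClosed_of_closure_subset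
  intro f hf
  have hc : CauchySeq (fun k : ℤ => f k) := by
    rw [Metric.cauchySeq_iff]
    intro ε hε
    obtain ⟨g, hg, hfg⟩ := Metric.mem_closure_iff.mp hf (ε/4) (by positivity)
    obtain ⟨L, hL⟩ := hg
    obtain ⟨N, hN⟩ := (Metric.tendsto_atTop.mp hL) (ε/4) (by positivity)
    refine ⟨N, fun m hm n hn => ?_⟩
    have hdm : dist (f m) (g m) ≤ dist f g := BoundedContinuousFunction.dist_coe_le_dist m
    have hdn : dist (g n) (f n) ≤ dist f g := by
      rw [dist_comm]; exact BoundedContinuousFunction.dist_coe_le_dist n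
    calc dist (f m) (f n)
        ≤ dist (f m) (g m) + dist (g m) (g n) + dist (g n) (f n) := dist_triangle4 _ _ _ _
      _ < ε := by
          have h1 := hN m hm; have h2 := hN n hn
          have hmn : dist (g m) (g n) ≤ dist (g m) L + dist L (g n) := dist_triangle _ _ _
          rw [dist_comm L (g n)] at hmn
          linarith
  exact cauchySeq_tendsto_of_complete hc

/-- A bounded function `f : ℤ → ℂ` belongs to `B_ℤ` if and only if `f k → 0` as `k → −∞`
and `lim_{k → ∞} f k` exists in `ℂ`. -/
theorem mem_BZ_iff (f : ℤ →ᵇ ℂ) :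
    f ∈ BZ ↔
      Tendsto (fun k : ℤ => f k) atBot (𝓝 (0 : ℂ)) ∧
        ∃ L : ℂ, Tendsto (fun k : ℤ => f k) atTop (𝓝 L) := by
  constructor
  · intro hf
    have hle : BZ ≤ SZ := by
      apply Submodule.topologicalClosure_minimal
      · rw [Submodule.span_le]
        rintro _ ⟨n, rfl⟩
        exact ⟨indBZ_atBot n, 1, indBZ_atTop n⟩
      · have : (SZ : Set (ℤ →ᵇ ℂ)) =
            {f : ℤ →ᵇ ℂ | Tendsto (fun k : ℤ => f k) atBot (𝓝 (0:ℂ))} ∩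
            {f : ℤ →ᵇ ℂ | ∃ L : ℂ, Tendsto (fun k : ℤ => f k) atTop (𝓝 L)} := by
          ext f; simp [SZ, Set.mem_setOf_eq]
        rw [this]
        exact isClosed_tendsto_atBot.inter isClosed_exists_tendsto_atTop
    exact hle hf
  · rintro ⟨h1, L, h2⟩
    have key : f ∈ closure
        ((Submodule.span ℂ (Set.range indBZ) : Submodule ℂ (ℤ →ᵇ ℂ)) : Set (ℤ →ᵇ ℂ)) := by
      rw [Metric.mem_closure_iff]
      intro ε hε
      obtain ⟨N₁, hN₁⟩ := eventually_atBot.mp ((Metric.tendsto_nhds.mp h1) (ε/2) (by positivity))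
      obtain ⟨N₂, hN₂⟩ := eventually_atTop.mp ((Metric.tendsto_nhds.mp h2) (ε/2) (by positivity))
      set a := min N₁ N₂ with ha
      set b := max N₁ N₂ with hb
      set g : ℤ →ᵇ ℂ :=
        L • indBZ b + ∑ n ∈ Finset.Icc a (b-1), f n • (indBZ n - indBZ (n+1)) with hg
      have hgmem : g ∈ Submodule.span ℂ (Set.range indBZ) := by
        apply Submodule.add_mem
        · exact Submodule.smul_mem _ _ (Submodule.subset_span ⟨b, rfl⟩)
        · apply Submodule.sum_mem
          intro n _
          exact Submodule.smul_mem _ _ (Submodule.sub_mem _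
            (Submodule.subset_span ⟨n, rfl⟩) (Submodule.subset_span ⟨n+1, rfl⟩))
      refine ⟨g, hgmem, ?_⟩
      have key : ∀ k : ℤ, dist (f k) (g k) ≤ ε/2 := by
        intro k
        have hgk : g k = L * (if b ≤ k then 1 else 0) +
            ∑ n ∈ Finset.Icc a (b-1),
              f n * ((if n ≤ k then (1:ℂ) else 0) - (if n+1 ≤ k then 1 else 0)) := by
          simp [hg, indBZ_apply]
        have hsum : ∑ n ∈ Finset.Icc a (b-1),
              f n * ((if n ≤ k then (1:ℂ) else 0) - (if n+1 ≤ k then 1 else 0))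
            = if k ∈ Finset.Icc a (b-1) then f k else 0 := by
          rw [← Finset.sum_ite_eq (Finset.Icc a (b-1)) k (fun n => f n)]
          apply Finset.sum_congr rfl
          intro n _
          by_cases hnk : k = n
          · subst hnk
            simp
          · by_cases h1 : n ≤ k
            · have : n + 1 ≤ k := by omega
              simp [h1, this, if_neg hnk]
            · have : ¬ (n + 1 ≤ k) := by omega
              simp [h1, this, if_neg hnk]
        rcases le_or_gt b k with hbk | hbk
        · have hnot : k ∉ Finset.Icc a (b-1) := by simp only [Finset.mem_Icc]; omega
          rw [hgk, hsum, if_pos hbk, if_neg hnot]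
          have : k ≥ N₂ := le_trans (le_max_right N₁ N₂) hbk
          have := hN₂ k this
          simpa using this.le
        · rcases lt_or_ge k a with hka | hka
          · have hnot : k ∉ Finset.Icc a (b-1) := by simp only [Finset.mem_Icc]; omega
            rw [hgk, hsum, if_neg (by omega : ¬ b ≤ k), if_neg hnot]
            have : k ≤ N₁ := le_trans hka.le (min_le_left N₁ N₂)
            have := hN₁ k this
            simpa using this.le
          · have hin : k ∈ Finset.Icc a (b-1) := by simp only [Finset.mem_Icc]; omega
            rw [hgk, hsum, if_neg (by omega : ¬ b ≤ k), if_pos hin]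
            simp only [mul_zero, zero_add, dist_self]
            positivity
      have : dist f g ≤ ε/2 := BoundedContinuousFunction.dist_le (by positivity) |>.mpr key
      linarith
    rw [BZ, ← SetLike.mem_coe, Submodule.topologicalClosure_coe]
    exact key
end

section
/- Suppose π is nonzero and irreducible in the sense that for every nonzero h ∈ H the set {π(a)h : a ∈ A} is dense in H. Then for every nonzero ξ ∈ ℓ²(ℕ, H), the closed linear span of {V_n* Π(a)(1 − V*V) V_m ξ : a ∈ A, n, m ∈ ℕ} is all of ℓ²(ℕ, H); that is, every nonzero vector is cyclic for this family of operators. -/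
open scoped ENNReal

/- `A` is a C*-algebra, `α` an automorphism of `A`, `H` a Hilbert space, `π : A → B(H)` a
representation, `Pi` is the representation `Π` of `A` on `ℓ²(ℕ, H)` given by
`(Π(a)ξ)(k) = π(α^k(a))(ξ(k))`, and `V m` is the operator `V_m` on `ℓ²(ℕ, H)` given by
`(V_m ξ)(k) = ξ(k + m)`. -/
variable {A H : Type*}
  [NonUnitalNormedRing A] [StarRing A] [CStarRing A] [NormedSpace ℂ A]
  [IsScalarTower ℂ A A] [SMulCommClass ℂ A A] [StarModule ℂ A] [CompleteSpace A]
  [NormedAddCommGroup H] [InnerProductSpace ℂ H] [CompleteSpace H]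
  (α : A ≃⋆ₐ[ℂ] A) (π : A →⋆ₙₐ[ℂ] (H →L[ℂ] H))
  (Pi : A → (lp (fun _ : ℕ => H) 2 →L[ℂ] lp (fun _ : ℕ => H) 2))
  (V : ℕ → (lp (fun _ : ℕ => H) 2 →L[ℂ] lp (fun _ : ℕ => H) 2))

open scoped ComplexInnerProductSpace

private lemma single_add' (n : ℕ) (u v : H) :
    lp.single (E := fun _ : ℕ => H) 2 n (u + v) =
      lp.single 2 n u + lp.single 2 n v := by
  apply lp.ext
  funext j
  by_cases h : j = n
  · subst h
    simp [lp.single_apply_self]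
  · simp [lp.single_apply_ne _ _ _ h]

private lemma single_norm' (n : ℕ) (u : H) :
    ‖lp.single (E := fun _ : ℕ => H) 2 n u‖ = ‖u‖ :=
  lp.norm_single (p := 2) (E := fun _ : ℕ => H) (by simp) n u

private lemma single_cont' (n : ℕ) :
    Continuous (fun u : H => lp.single (E := fun _ : ℕ => H) 2 n u) := by
  have : Isometry (fun u : H => lp.single (E := fun _ : ℕ => H) 2 n u) := by
    refine Isometry.of_dist_eq fun u v => ?_
    have hsub : lp.single (E := fun _ : ℕ => H) 2 n u - lp.single 2 n v
        = lp.single 2 n (u - v) := by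
      rw [sub_eq_iff_eq_add, ← single_add', sub_add_cancel]
    rw [dist_eq_norm, dist_eq_norm, hsub, single_norm']
  exact this.continuous

/-- If `π` is nonzero and irreducible (every nonzero `h ∈ H` is cyclic for `π`), then every
nonzero `ξ ∈ ℓ²(ℕ, H)` is cyclic for the family `{V_n* Π(a)(1 − V*V) V_m : a ∈ A, n, m ∈ ℕ}`:
the closed linear span of its orbit is all of `ℓ²(ℕ, H)`. -/
theorem cyclic_vectors
    (hPi : ∀ (a : A) (ξ : lp (fun _ : ℕ => H) 2) (k : ℕ),
      (Pi a ξ) k = π ((⇑α)^[k] a) (ξ k))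
    (hV : ∀ (m : ℕ) (ξ : lp (fun _ : ℕ => H) 2) (k : ℕ), (V m ξ) k = ξ (k + m))
    (hπ_ne : π ≠ 0)
    (hirr : ∀ h : H, h ≠ 0 → Dense (Set.range fun a : A => π a h)) :
    ∀ ξ : lp (fun _ : ℕ => H) 2, ξ ≠ 0 →
      (Submodule.span ℂ
        {η : lp (fun _ : ℕ => H) 2 | ∃ (a : A) (n m : ℕ),
          η = (star (V n) * Pi a * (1 - star (V 1) * V 1) * V m) ξ}).topologicalClosure = ⊤ := by
  -- star (V n) maps `single 0 u` to `single n u`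
  have star_V_single : ∀ (n : ℕ) (u : H),
      star (V n) (lp.single 2 0 u) = lp.single 2 n u := by
    intro n u
    apply ext_inner_right ℂ
    intro w
    rw [ContinuousLinearMap.star_eq_adjoint, ContinuousLinearMap.adjoint_inner_left,
      lp.inner_single_left, lp.inner_single_left, hV, Nat.zero_add]
  -- `1 - star (V 1) * V 1` is the projection onto coordinate `0`
  have proj : ∀ η : lp (fun _ : ℕ => H) 2,
      star (V 1) (V 1 η) = η - lp.single 2 0 (η 0) := by
    intro η
    apply ext_inner_right ℂ
    intro w
    rw [ContinuousLinearMap.star_eq_adjoint, ContinuousLinearMap.adjoint_inner_left,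
      inner_sub_left, lp.inner_single_left]
    rw [lp.inner_eq_tsum, lp.inner_eq_tsum η w,
      Summable.tsum_eq_zero_add (f := fun i => ⟪η i, w i⟫) (lp.summable_inner η w)]
    simp only [hV]
    rw [add_sub_cancel_left]
  -- `Pi a` acts as `π a` on coordinate 0
  have Pi_single : ∀ (a : A) (u : H),
      Pi a (lp.single 2 0 u) = lp.single 2 0 (π a u) := by
    intro a u
    apply lp.ext
    funext k
    rw [hPi]
    cases k with
    | zero => simp [lp.single_apply_self]
    | succ j =>
        rw [lp.single_apply_ne _ _ _ (Nat.succ_ne_zero j),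
          lp.single_apply_ne _ _ _ (Nat.succ_ne_zero j), map_zero]
  intro ξ hξ
  -- the key computation
  have key : ∀ (a : A) (n m : ℕ),
      (star (V n) * Pi a * (1 - star (V 1) * V 1) * V m) ξ
        = lp.single 2 n (π a (ξ m)) := by
    intro a n m
    have h1 : (1 - star (V 1) * V 1) (V m ξ) = lp.single 2 0 (ξ m) := by
      rw [ContinuousLinearMap.sub_apply, ContinuousLinearMap.one_apply,
        ContinuousLinearMap.mul_apply, proj, sub_sub_cancel, hV, Nat.zero_add]
    rw [ContinuousLinearMap.mul_apply, ContinuousLinearMap.mul_apply,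
      ContinuousLinearMap.mul_apply, h1,
      Pi_single, star_V_single]
  -- some coordinate of ξ is nonzero
  obtain ⟨m₀, hm₀⟩ : ∃ m, ξ m ≠ 0 := by
    by_contra h
    push_neg at h
    exact hξ (lp.ext (funext fun k => by simpa using h k))
  set S : Set (lp (fun _ : ℕ => H) 2) :=
    {η : lp (fun _ : ℕ => H) 2 | ∃ (a : A) (n m : ℕ),
      η = (star (V n) * Pi a * (1 - star (V 1) * V 1) * V m) ξ} with hS
  set K := (Submodule.span ℂ S).topologicalClosure with hK
  have hKc : IsClosed (K : Set (lp (fun _ : ℕ => H) 2)) :=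
    Submodule.isClosed_topologicalClosure _
  have hmem : ∀ (n : ℕ) (h : H), lp.single 2 n h ∈ K := by
    intro n
    have hcl : IsClosed {h : H | lp.single 2 n h ∈ K} :=
      hKc.preimage (single_cont' n)
    have hsub : (Set.range fun a : A => π a (ξ m₀)) ⊆
        {h : H | lp.single 2 n h ∈ K} := by
      rintro _ ⟨a, rfl⟩
      refine Submodule.le_topologicalClosure _ (Submodule.subset_span ?_)
      exact ⟨a, n, m₀, (key a n m₀).symm⟩
    have hd : Dense {h : H | lp.single 2 n h ∈ K} :=
      Dense.mono hsub (hirr _ hm₀)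
    have huniv : {h : H | lp.single 2 n h ∈ K} = Set.univ :=
      hcl.closure_eq.symm.trans hd.closure_eq
    intro h
    show h ∈ {h : H | lp.single 2 n h ∈ K}
    rw [huniv]; trivial
  rw [eq_top_iff]
  rintro f -
  have hs : HasSum (fun n : ℕ => lp.single 2 n (f n)) f :=
    lp.hasSum_single ENNReal.ofNat_ne_top f
  have hpart : ∀ s : Finset ℕ, (∑ n ∈ s, lp.single 2 n (f n)) ∈ K :=
    fun s => Submodule.sum_mem _ fun n _ => hmem n (f n)
  exact hKc.mem_of_tendsto hs (Filter.Eventually.of_forall hpart)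
end

section
/- (a) For every m ∈ ℤ and y ∈ Y, the closure of the ℤ-orbit of ((m : Z∞), y) in Z∞ × Y equals Z∞ × cl{y}, where cl{y} is the closure of {y} in Y. (b) For every y ∈ Y, the closure of the ℤ-orbit of (∞, y) in Z∞ × Y equals {∞} × cl(ℤ·y), where ℤ·y = {σⁿ(y) : n ∈ ℤ} is the ℤ-orbit of y in Y. -/
open Filter Topology

/-- The order topology on `Z∞ = ℤ ∪ {∞}` (formally `WithTop ℤ`): every `n ∈ ℤ` is isolated,
and the sets `J_n = {k : ℤ | n ≤ k} ∪ {∞}` form a neighborhood basis at `∞`. -/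
noncomputable instance : TopologicalSpace (WithTop ℤ) := Preorder.topology (WithTop ℤ)

instance : OrderTopology (WithTop ℤ) := ⟨rfl⟩

/-- The integer power `σⁿ` (`n : ℤ`) of a homeomorphism `σ : Y ≃ₜ Y`, as a function. -/
def sigmaPow {Y : Type*} [TopologicalSpace Y] (σ : Y ≃ₜ Y) (n : ℤ) : Y → Y :=
  fun y => (σ.toEquiv ^ n) y

/-- The action of `ℤ` on `Z∞ × Y`: `n·(m, y) = (m + n, y)` for `m ∈ ℤ`, and
`n·(∞, y) = (∞, σⁿ(y))`. -/
def actZ {Y : Type*} [TopologicalSpace Y] (σ : Y ≃ₜ Y) (n : ℤ) (p : WithTop ℤ × Y) :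
    WithTop ℤ × Y :=
  (p.1.map (· + n), if p.1 = ⊤ then sigmaPow σ n p.2 else p.2)

lemma closure_range_intCast : closure (Set.range ((↑) : ℤ → WithTop ℤ)) = Set.univ := by
  apply Set.eq_univ_of_forall
  intro x
  cases x with
  | top =>
    rw [mem_closure_iff_nhds_basis nhds_top_basis]
    rintro (_ | a) ha
    · exact absurd rfl (ne_of_lt ha)
    · exact ⟨((a + 1 : ℤ) : WithTop ℤ), ⟨a + 1, rfl⟩, Set.mem_Ioi.2 (WithTop.coe_lt_coe.2 (lt_add_one a))⟩
  | coe k => exact subset_closure ⟨k, rfl⟩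

lemma isClosed_top : IsClosed ({⊤} : Set (WithTop ℤ)) := by
  rw [← Set.Ici_top]
  exact isClosed_Ici

/-- (a) The closure of the `ℤ`-orbit of `((m : Z∞), y)` equals `Z∞ × cl{y}`.
(b) The closure of the `ℤ`-orbit of `(∞, y)` equals `{∞} × cl(ℤ·y)`. -/
theorem closure_orbit_actZ {Y : Type*} [TopologicalSpace Y] (σ : Y ≃ₜ Y) :
    (∀ (m : ℤ) (y : Y),
      closure (Set.range fun n : ℤ => actZ σ n ((m : WithTop ℤ), y)) =
        (Set.univ : Set (WithTop ℤ)) ×ˢ closure {y}) ∧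
    (∀ y : Y,
      closure (Set.range fun n : ℤ => actZ σ n ((⊤ : WithTop ℤ), y)) =
        ({⊤} : Set (WithTop ℤ)) ×ˢ closure (Set.range fun n : ℤ => sigmaPow σ n y)) := by
  constructor
  · intro m y
    have hr : (Set.range fun n : ℤ => actZ σ n ((m : WithTop ℤ), y)) =
        (Set.range ((↑) : ℤ → WithTop ℤ)) ×ˢ ({y} : Set Y) := by
      ext ⟨a, b⟩
      simp only [actZ, Set.mem_range, Set.mem_prod, Set.mem_singleton_iff, Prod.mk.injEq,
        WithTop.map_coe, WithTop.coe_ne_top, if_neg]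
      constructor
      · rintro ⟨n, h1, h2⟩; exact ⟨⟨m + n, h1⟩, h2.symm⟩
      · rintro ⟨⟨k, hk⟩, hb⟩; exact ⟨k - m, by rw [← hk]; congr 1; ring, hb.symm⟩
    rw [hr, closure_prod_eq, closure_range_intCast]
  · intro y
    have hr : (Set.range fun n : ℤ => actZ σ n ((⊤ : WithTop ℤ), y)) =
        ({⊤} : Set (WithTop ℤ)) ×ˢ Set.range (fun n : ℤ => sigmaPow σ n y) := by
      ext ⟨a, b⟩
      simp only [actZ, Set.mem_range, Set.mem_prod, Set.mem_singleton_iff, Prod.mk.injEq,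
        WithTop.map_top, if_pos rfl]
      constructor
      · rintro ⟨n, h1, h2⟩; exact ⟨h1.symm, n, h2⟩
      · rintro ⟨ha, n, hn⟩; exact ⟨n, ha.symm, hn⟩
    rw [hr, closure_prod_eq, isClosed_top.closure_eq]
end

section
/- Suppose Y is Hausdorff, and let Q denote the quotient of (Z∞ × Y) × 𝕋 by the Williams relation, with the quotient topology. Then the map ι : Y → Q sending φ to the class of ((0, φ), 1) is injective, continuous, and open onto its image; its image equals the set of classes of points whose first coordinate lies in ℤ, and this image is open and dense in Q. -/
open Filter Topology

/-- The Williams relation on `X × 𝕋` associated to an action `act` of `ℤ` on a topological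
space `X`: `(x, z) ∼ (y, w)` iff the closures of the `ℤ`-orbits of `x` and `y` coincide and
`zⁿ = wⁿ` for all `n` in the stability group of `x`. -/
def williams {X : Type*} [TopologicalSpace X] (act : ℤ → X → X)
    (p q : X × Circle) : Prop :=
  closure (Set.range fun n : ℤ => act n p.1) = closure (Set.range fun n : ℤ => act n q.1) ∧
  ∀ n : ℤ, act n p.1 = p.1 → p.2 ^ n = q.2 ^ n

/-- The map `ι : Y → Q` into the quotient `Q` of `(Z∞ × Y) × 𝕋` by the Williams relation,
sending `φ` to the class of `((0, φ), 1)`. -/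
noncomputable def iotaQ {Y : Type*} [TopologicalSpace Y] (σ : Y ≃ₜ Y) :
    Y → Quot (williams (actZ σ)) :=
  fun φ => Quot.mk _ ((((0 : ℤ) : WithTop ℤ), φ), (1 : Circle))


lemma isOpen_coe_singleton (m : ℤ) : IsOpen {((m : ℤ) : WithTop ℤ)} := by
  have : Set.Ioo (((m - 1 : ℤ) : WithTop ℤ)) ((m + 1 : ℤ) : WithTop ℤ) = {((m : ℤ) : WithTop ℤ)} := by
    ext t
    cases t with
    | top => simp [Set.mem_Ioo]
    | coe k =>
      simp only [Set.mem_Ioo, WithTop.coe_lt_coe, Set.mem_singleton_iff, WithTop.coe_eq_coe]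
      omega
  rw [← this]; exact isOpen_Ioo

lemma actZ_coe {Y : Type*} [TopologicalSpace Y] (σ : Y ≃ₜ Y) (n m : ℤ) (φ : Y) :
    actZ σ n ((m : WithTop ℤ), φ) = (((m + n : ℤ) : WithTop ℤ), φ) := by
  simp [actZ, WithTop.map_coe]

lemma actZ_top {Y : Type*} [TopologicalSpace Y] (σ : Y ≃ₜ Y) (n : ℤ) (y : Y) :
    actZ σ n ((⊤ : WithTop ℤ), y) = (⊤, sigmaPow σ n y) := by
  simp [actZ]

lemma range_act {Y : Type*} [TopologicalSpace Y] (σ : Y ≃ₜ Y) (m : ℤ) (φ : Y) :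
    (Set.range fun n : ℤ => actZ σ n ((m : WithTop ℤ), φ)) =
      {p : WithTop ℤ × Y | p.1 ≠ ⊤ ∧ p.2 = φ} := by
  ext p
  constructor
  · rintro ⟨n, rfl⟩
    show actZ σ n ((m : WithTop ℤ), φ) ∈ _
    rw [actZ_coe]
    exact ⟨WithTop.coe_ne_top, rfl⟩
  · rintro ⟨h1, h2⟩
    obtain ⟨k, hk⟩ := WithTop.ne_top_iff_exists.mp h1
    refine ⟨k - m, show actZ σ (k - m) ((m : WithTop ℤ), φ) = _ from ?_⟩
    rw [actZ_coe]
    have hmk : m + (k - m) = k := by omega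
    rw [hmk, ← h2]
    exact Prod.ext hk rfl

lemma key {Y : Type*} [TopologicalSpace Y] [T2Space Y] (σ : Y ≃ₜ Y) {m k : ℤ} {φ φ' : Y}
    (h : (((m : ℤ) : WithTop ℤ), φ') ∈
      closure (Set.range fun n : ℤ => actZ σ n ((k : WithTop ℤ), φ))) : φ' = φ := by
  have h2 : φ' ∈ closure ({φ} : Set Y) := by
    rw [mem_closure_iff] at h ⊢
    intro U hU hφ'
    obtain ⟨p, hp, hps⟩ := h ({((m : ℤ) : WithTop ℤ)} ×ˢ U)
      ((isOpen_coe_singleton m).prod hU) ⟨rfl, hφ'⟩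
    rw [range_act] at hps
    exact ⟨φ, hps.2 ▸ hp.2, rfl⟩
  simpa using h2

lemma eqvGen_closure_eq {Y : Type*} [TopologicalSpace Y] (σ : Y ≃ₜ Y)
    {p q : (WithTop ℤ × Y) × Circle} (h : Relation.EqvGen (williams (actZ σ)) p q) :
    closure (Set.range fun n : ℤ => actZ σ n p.1) =
      closure (Set.range fun n : ℤ => actZ σ n q.1) := by
  induction h with
  | rel _ _ h => exact h.1
  | refl => rfl
  | symm _ _ _ ih => exact ih.symm
  | trans _ _ _ _ _ ih1 ih2 => exact ih1.trans ih2

lemma mk_eq_iota {Y : Type*} [TopologicalSpace Y] (σ : Y ≃ₜ Y) (m : ℤ) (φ : Y) (z : Circle) :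
    Quot.mk (williams (actZ σ)) (((m : WithTop ℤ), φ), z) = iotaQ σ φ := by
  apply Quot.sound
  constructor
  · rw [range_act, range_act]
  · intro n hn
    have : ((m + n : ℤ) : WithTop ℤ) = (m : WithTop ℤ) := by
      have := congrArg Prod.fst hn
      rwa [actZ_coe] at this
    have hn0 : n = 0 := by
      rw [WithTop.coe_eq_coe] at this; omega
    simp [hn0]

lemma top_not_rel {Y : Type*} [TopologicalSpace Y] [T2Space Y] (σ : Y ≃ₜ Y) {y : Y}
    {z : Circle} {φ : Y}
    (h : Quot.mk (williams (actZ σ)) (((⊤ : WithTop ℤ), y), z) = iotaQ σ φ) : False := by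
  rw [iotaQ, Quot.eq] at h
  have hc := eqvGen_closure_eq σ h
  dsimp only at hc
  have hmem : (((0 : ℤ) : WithTop ℤ), φ) ∈
      closure (Set.range fun n : ℤ => actZ σ n ((⊤ : WithTop ℤ), y)) := by
    rw [hc]
    exact subset_closure ⟨0, show actZ σ 0 _ = _ by rw [actZ_coe]; norm_num⟩
  have hsub : closure (Set.range fun n : ℤ => actZ σ n ((⊤ : WithTop ℤ), y)) ⊆
      {p : WithTop ℤ × Y | p.1 = ⊤} := by
    apply closure_minimal
    · rintro _ ⟨n, rfl⟩
      show (actZ σ n ((⊤ : WithTop ℤ), y)).1 = ⊤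
      rw [actZ_top]
    · exact (isClosed_singleton.preimage continuous_fst)
  exact WithTop.coe_ne_top (hsub hmem)

/-- For Hausdorff `Y`, the map `ι : Y → Q`, `φ ↦ [((0, φ), 1)]`, is injective, continuous
and open onto its image; its image is the set of classes of points whose first coordinate
lies in `ℤ`, and this image is open and dense in `Q`. -/
theorem iotaQ_properties {Y : Type*} [TopologicalSpace Y] [T2Space Y] (σ : Y ≃ₜ Y) :
    Function.Injective (iotaQ σ) ∧
    Continuous (iotaQ σ) ∧
    IsOpenMap (iotaQ σ) ∧
    Set.range (iotaQ σ) =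
      {q : Quot (williams (actZ σ)) | ∃ (m : ℤ) (φ : Y) (z : Circle),
        q = Quot.mk _ (((m : WithTop ℤ), φ), z)} ∧
    IsOpen (Set.range (iotaQ σ)) ∧
    Dense (Set.range (iotaQ σ)) := by
  have hinj : Function.Injective (iotaQ σ) := by
    intro φ φ' h
    rw [iotaQ, iotaQ, Quot.eq] at h
    have hc := eqvGen_closure_eq σ h
    dsimp only at hc
    have h0 : (((0 : ℤ) : WithTop ℤ), φ) ∈
        closure (Set.range fun n : ℤ => actZ σ n (((0 : ℤ) : WithTop ℤ), φ)) :=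
      subset_closure ⟨0, show actZ σ 0 _ = _ by rw [actZ_coe]; norm_num⟩
    rw [hc] at h0
    exact key σ h0
  have hrange : Set.range (iotaQ σ) =
      {q : Quot (williams (actZ σ)) | ∃ (m : ℤ) (φ : Y) (z : Circle),
        q = Quot.mk _ (((m : WithTop ℤ), φ), z)} := by
    ext q
    constructor
    · rintro ⟨φ, rfl⟩
      exact ⟨0, φ, 1, rfl⟩
    · rintro ⟨m, φ, z, rfl⟩
      exact ⟨φ, (mk_eq_iota σ m φ z).symm⟩
  have hpre : ∀ (U : Set Y), IsOpen U →
      Quot.mk (williams (actZ σ)) ⁻¹' (iotaQ σ '' U) =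
        {p : (WithTop ℤ × Y) × Circle | p.1.1 ≠ ⊤ ∧ p.1.2 ∈ U} := by
    intro U hU
    ext ⟨⟨t, y⟩, z⟩
    constructor
    · rintro ⟨φ, hφU, hφ⟩
      cases t with
      | top => exact absurd hφ.symm (fun h => top_not_rel σ h)
      | coe m =>
        refine ⟨WithTop.coe_ne_top, ?_⟩
        rw [iotaQ, Quot.eq] at hφ
        have hc := eqvGen_closure_eq σ hφ.symm
        dsimp only at hc
        have : ((m : WithTop ℤ), y) ∈
            closure (Set.range fun n : ℤ => actZ σ n (((0 : ℤ) : WithTop ℤ), φ)) := by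
          rw [← hc]
          exact subset_closure ⟨0, show actZ σ 0 _ = _ by rw [actZ_coe]; norm_num⟩
        rw [key σ this]; exact hφU
    · rintro ⟨h1, h2⟩
      dsimp only at h1 h2
      obtain ⟨m, hm⟩ := WithTop.ne_top_iff_exists.mp h1
      exact ⟨y, h2, (by rw [← hm]; exact (mk_eq_iota σ m y z).symm)⟩
  have hopenmap : IsOpenMap (iotaQ σ) := by
    intro U hU
    rw [← isQuotientMap_quot_mk.isOpen_preimage, hpre U hU]
    have : {p : (WithTop ℤ × Y) × Circle | p.1.1 ≠ ⊤ ∧ p.1.2 ∈ U} =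
        ((fun p : (WithTop ℤ × Y) × Circle => p.1.1) ⁻¹' {⊤}ᶜ) ∩
        ((fun p : (WithTop ℤ × Y) × Circle => p.1.2) ⁻¹' U) := rfl
    rw [this]
    exact ((isClosed_singleton.isOpen_compl).preimage (continuous_fst.comp continuous_fst)).inter
      (hU.preimage (continuous_snd.comp continuous_fst))
  have hopen : IsOpen (Set.range (iotaQ σ)) := by
    rw [← Set.image_univ]
    exact hopenmap _ isOpen_univ
  have hdense : Dense (Set.range (iotaQ σ)) := by
    intro q
    induction q using Quot.ind with
    | _ p =>
      obtain ⟨⟨t, y⟩, z⟩ := p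
      cases t with
      | coe m => exact subset_closure ⟨y, (mk_eq_iota σ m y z).symm⟩
      | top =>
        have htend : Tendsto (fun k : ℤ => ((k : ℤ) : WithTop ℤ)) atTop (𝓝 ⊤) := by
          rw [nhds_top_order]
          simp only [tendsto_iInf, tendsto_principal]
          intro l hl
          obtain ⟨j, hj⟩ := WithTop.ne_top_iff_exists.mp hl.ne
          filter_upwards [eventually_gt_atTop j] with k hk
          rw [← hj]
          exact Set.mem_Ioi.mpr (WithTop.coe_lt_coe.mpr hk)
        have : Tendsto (fun k : ℤ => Quot.mk (williams (actZ σ)) (((k : WithTop ℤ), y), z))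
            atTop (𝓝 (Quot.mk (williams (actZ σ)) (((⊤ : WithTop ℤ), y), z))) := by
          apply (continuous_quot_mk.tendsto _).comp
          exact ((htend.prodMk_nhds tendsto_const_nhds).prodMk_nhds tendsto_const_nhds)
        exact mem_closure_of_tendsto this
          (Eventually.of_forall fun k => ⟨y, (mk_eq_iota σ k y z).symm⟩)
  exact ⟨hinj, continuous_quot_mk.comp ((continuous_const.prodMk continuous_id).prodMk continuous_const), hopenmap, hrange, hopen, hdense⟩
end

section
/- Suppose Y is a T₀ space. For quasi-orbits of the ℤ-action on Z∞ × Y: (a) for m, n ∈ ℤ and y, y' ∈ Y, O((m, y)) = O((n, y')) if and only if y = y'; (b) for m ∈ ℤ, O((m, y)) ≠ O((∞, y')) for all y, y' ∈ Y; (c) O((∞, y)) = O((∞, y')) if and only if the closures of the σ-orbits of y and y' in Y coincide, i.e., if and only if y and y' have the same quasi-orbit in Y for the action n·y = σⁿ(y). -/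
open Filter Topology

lemma range_actZ_int {Y : Type*} [TopologicalSpace Y] (σ : Y ≃ₜ Y) (m : ℤ) (y : Y) :
    (Set.range fun n : ℤ => actZ σ n ((m : WithTop ℤ), y)) =
      (Set.range ((↑) : ℤ → WithTop ℤ)) ×ˢ {y} := by
  ext ⟨a, b⟩
  simp only [actZ, Set.mem_range, Set.mem_prod, Set.mem_singleton_iff,
    WithTop.coe_ne_top, if_false, WithTop.map_coe, Prod.mk.injEq]
  constructor
  · rintro ⟨n, h1, h2⟩
    exact ⟨⟨m + n, h1⟩, h2.symm⟩
  · rintro ⟨⟨k, hk⟩, hb⟩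
    exact ⟨k - m, by simpa using hk, hb.symm⟩

lemma range_actZ_top {Y : Type*} [TopologicalSpace Y] (σ : Y ≃ₜ Y) (y : Y) :
    (Set.range fun n : ℤ => actZ σ n ((⊤ : WithTop ℤ), y)) =
      ({⊤} : Set (WithTop ℤ)) ×ˢ (Set.range fun n : ℤ => sigmaPow σ n y) := by
  ext ⟨a, b⟩
  simp only [actZ, Set.mem_range, Set.mem_prod, Set.mem_singleton_iff, if_true,
    WithTop.map_top, Prod.mk.injEq]
  constructor
  · rintro ⟨n, h1, h2⟩
    exact ⟨h1.symm, n, h2⟩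
  · rintro ⟨ha, n, hb⟩
    exact ⟨n, ha.symm, hb⟩

lemma dense_intCast : Dense (Set.range ((↑) : ℤ → WithTop ℤ)) := by
  intro x
  induction x with
  | top =>
    rw [mem_closure_iff_nhds_basis nhds_top_basis]
    rintro a ha
    lift a to ℤ using ha.ne
    exact ⟨(a + 1 : ℤ), Set.mem_range_self _, by
      simp only [Set.mem_Ioi]
      exact_mod_cast lt_add_one a⟩
  | coe k => exact subset_closure (Set.mem_range_self k)

/-- For a T₀ space `Y`, quasi-orbits of the `ℤ`-action on `Z∞ × Y`:
(a) `O((m, y)) = O((n, y'))` iff `y = y'`;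
(b) `O((m, y)) ≠ O((∞, y'))`;
(c) `O((∞, y)) = O((∞, y'))` iff the closures of the `σ`-orbits of `y` and `y'` coincide. -/
theorem quasiOrbits_actZ {Y : Type*} [TopologicalSpace Y] [T0Space Y] (σ : Y ≃ₜ Y) :
    (∀ (m m' : ℤ) (y y' : Y),
      closure (Set.range fun n : ℤ => actZ σ n ((m : WithTop ℤ), y)) =
          closure (Set.range fun n : ℤ => actZ σ n ((m' : WithTop ℤ), y')) ↔ y = y') ∧
    (∀ (m : ℤ) (y y' : Y),
      closure (Set.range fun n : ℤ => actZ σ n ((m : WithTop ℤ), y)) ≠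
        closure (Set.range fun n : ℤ => actZ σ n ((⊤ : WithTop ℤ), y'))) ∧
    (∀ y y' : Y,
      closure (Set.range fun n : ℤ => actZ σ n ((⊤ : WithTop ℤ), y)) =
          closure (Set.range fun n : ℤ => actZ σ n ((⊤ : WithTop ℤ), y')) ↔
        closure (Set.range fun n : ℤ => sigmaPow σ n y) =
          closure (Set.range fun n : ℤ => sigmaPow σ n y')) := by
  have hint : ∀ (m : ℤ) (y : Y),
      closure (Set.range fun n : ℤ => actZ σ n ((m : WithTop ℤ), y)) =
        (Set.univ : Set (WithTop ℤ)) ×ˢ closure {y} := by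
    intro m y
    rw [range_actZ_int, closure_prod_eq, dense_intCast.closure_eq]
  have htop : ∀ y : Y,
      closure (Set.range fun n : ℤ => actZ σ n ((⊤ : WithTop ℤ), y)) =
        ({⊤} : Set (WithTop ℤ)) ×ˢ closure (Set.range fun n : ℤ => sigmaPow σ n y) := by
    intro y
    rw [range_actZ_top, closure_prod_eq, closure_singleton]
  refine ⟨?_, ?_, ?_⟩
  · intro m m' y y'
    rw [hint, hint]
    constructor
    · intro h
      have h2 : closure {y} = closure {y'} := by
        ext b
        have := Set.ext_iff.mp h ((⊤ : WithTop ℤ), b)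
        simpa using this
      exact (Inseparable.eq (inseparable_iff_closure_eq.mpr h2))
    · rintro rfl; rfl
  · intro m y y' h
    rw [hint, htop] at h
    have := Set.ext_iff.mp h (((0 : ℤ) : WithTop ℤ), y)
    simp [subset_closure (Set.mem_singleton y)] at this
  · intro y y'
    rw [htop, htop]
    constructor
    · intro h
      ext b
      have := Set.ext_iff.mp h ((⊤ : WithTop ℤ), b)
      simpa using this
    · intro h; rw [h]
end
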